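/- For all positive integers n and real q with 0 < q < 1: ∑_{n ≥ k ≥ m ≥ 1} q^{k+m}/([k]_q^2 [m]_q^2) = ∑_{n ≥ k ≥ m ≥ p ≥ 1} (-1)^{k+1} q^{k(k+1)/2} C_q(n,k) q^m/([k]_q [m]_q^2 [p]_q). -/

import Mathlib

open Finset

/-- Gaussian binomial coefficient, vanishing unless `k ≤ n`. -/
noncomputable def qbinom (q : ℝ) (n k : ℕ) : ℝ :=
  if k ≤ n then ∏ j ∈ Finset.Icc 1 k, (1 - q ^ (n - k + j)) / (1 - q ^ j) else 0

/-- The `q`-analog of a natural number: `[k]_q = (1-q^k)/(1-q)`. -/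
noncomputable def qnum (q : ℝ) (k : ℕ) : ℝ := (1 - q ^ k) / (1 - q)

noncomputable def qD (q : ℝ) (k : ℕ) : ℝ := ∏ j ∈ Finset.Icc 1 k, (1 - q ^ j)
noncomputable def qF (q : ℝ) (n k : ℕ) : ℝ := ∏ j ∈ Finset.Icc 1 k, (1 - q ^ (n - k + j))

section basic
variable {q : ℝ}

lemma one_sub_pow_pos (hq0 : 0 < q) (hq1 : q < 1) {j : ℕ} (hj : 1 ≤ j) : 0 < 1 - q ^ j := by
  have : q ^ j < 1 := pow_lt_one₀ hq0.le hq1 (by omega)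
  linarith

lemma one_sub_pow_ne (hq0 : 0 < q) (hq1 : q < 1) {j : ℕ} (hj : 1 ≤ j) : (1 - q ^ j) ≠ 0 :=
  ne_of_gt (one_sub_pow_pos hq0 hq1 hj)

lemma qnum_ne (hq0 : 0 < q) (hq1 : q < 1) {k : ℕ} (hk : 1 ≤ k) : qnum q k ≠ 0 := by
  unfold qnum
  exact div_ne_zero (one_sub_pow_ne hq0 hq1 hk) (by linarith)

lemma qD_ne (hq0 : 0 < q) (hq1 : q < 1) (k : ℕ) : qD q k ≠ 0 := by
  unfold qD
  exact prod_ne_zero_iff.2 fun j hj => one_sub_pow_ne hq0 hq1 (mem_Icc.1 hj).1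

lemma qbinom_eq {n k : ℕ} (h : k ≤ n) : qbinom q n k = qF q n k / qD q k := by
  rw [qbinom, if_pos h, qF, qD, ← prod_div_distrib]

lemma qbinom_zero (n : ℕ) : qbinom q n 0 = 1 := by
  rw [qbinom, if_pos (Nat.zero_le n)]; simp

lemma qbinom_of_gt {n k : ℕ} (h : n < k) : qbinom q n k = 0 := by
  rw [qbinom, if_neg (by omega)]

lemma qbinom_self (hq0 : 0 < q) (hq1 : q < 1) (n : ℕ) : qbinom q n n = 1 := by
  rw [qbinom, if_pos le_rfl]
  rw [Finset.prod_congr rfl (fun j hj => ?_), Finset.prod_const_one]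
  have hj1 : 1 ≤ j := (mem_Icc.1 hj).1
  rw [show n - n + j = j by omega]
  exact div_self (one_sub_pow_ne hq0 hq1 hj1)

lemma qD_succ {k : ℕ} (hk : 1 ≤ k) : qD q k = qD q (k-1) * (1 - q ^ k) := by
  unfold qD
  obtain ⟨k, rfl⟩ : ∃ m, k = m + 1 := ⟨k - 1, by omega⟩
  rw [Finset.prod_Icc_succ_top (by omega)]
  simp

/-- `qF q (n+1) k = qF q n (k-1) * (1 - q^(n+1))` for `1 ≤ k ≤ n+1`. -/
lemma qF_top {n k : ℕ} (hk : 1 ≤ k) (hkn : k ≤ n + 1) :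
    qF q (n+1) k = qF q n (k-1) * (1 - q ^ (n+1)) := by
  unfold qF
  obtain ⟨k, rfl⟩ : ∃ m, k = m + 1 := ⟨k - 1, by omega⟩
  rw [Finset.prod_Icc_succ_top (by omega)]
  simp only [Nat.add_sub_cancel]
  congr 1
  · exact Finset.prod_congr rfl (fun j hj => by rw [show n + 1 - (k+1) + j = n - k + j by omega])
  · rw [show n + 1 - (k+1) + (k+1) = n + 1 by omega]

/-- `qF q n k = (1 - q^(n+1-k)) * qF q n (k-1)` for `1 ≤ k ≤ n`. -/
lemma qF_bot {n k : ℕ} (hk : 1 ≤ k) (hkn : k ≤ n) :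
    qF q n k = (1 - q ^ (n + 1 - k)) * qF q n (k-1) := by
  unfold qF
  rw [← Finset.Ico_add_one_right_eq_Icc, ← Finset.Ico_add_one_right_eq_Icc,
    Finset.prod_Ico_eq_prod_range, Finset.prod_Ico_eq_prod_range]
  obtain ⟨k, rfl⟩ : ∃ m, k = m + 1 := ⟨k - 1, by omega⟩
  rw [show k + 1 + 1 - 1 = k + 1 from rfl, show k + 1 - 1 + 1 - 1 = k from rfl,
    Finset.prod_range_succ' (fun x => 1 - q ^ (n - (k+1) + (1 + x)))]
  rw [mul_comm]
  congr 1
  · rw [show n - (k + 1) + (1 + 0) = n + 1 - (k+1) by omega]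
  · exact Finset.prod_congr rfl (fun j hj => by
      rw [show n - (k+1) + (1 + (j+1)) = n - k + (1 + j) by omega, Nat.add_sub_cancel])

lemma qbinom_ratio2 (hq0 : 0 < q) (hq1 : q < 1) {n k : ℕ} (hk : 1 ≤ k) :
    (1 - q ^ k) * qbinom q n k = (1 - q ^ (n + 1 - k)) * qbinom q n (k-1) := by
  rcases le_or_gt k n with h | h
  · rw [qbinom_eq h, qbinom_eq (show k - 1 ≤ n by omega), qF_bot hk h, qD_succ hk]
    have hD := qD_ne hq0 hq1 (q := q) (k - 1)
    have hk' := one_sub_pow_ne hq0 hq1 hk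
    field_simp
  · rcases Nat.eq_or_lt_of_le h with h' | h'
    · obtain rfl : k = n + 1 := h'.symm
      rw [show n + 1 - (n+1) = 0 by omega, qbinom_of_gt h]
      simp
    · rw [qbinom_of_gt h, qbinom_of_gt (show n < k - 1 by omega)]
      simp

lemma qbinom_pascal1 (hq0 : 0 < q) (hq1 : q < 1) {n k : ℕ} (hk : 1 ≤ k) :
    qbinom q (n+1) k = qbinom q n k + q ^ (n + 1 - k) * qbinom q n (k-1) := by
  rcases le_or_gt k n with h | h
  · have h1 : k ≤ n + 1 := by omega
    have h2 : k - 1 ≤ n := by omega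
    obtain ⟨a, ha⟩ : ∃ a, n + 1 - k = a ∧ n + 1 = a + k := ⟨n + 1 - k, rfl, by omega⟩
    obtain ⟨ha1, ha2⟩ := ha
    rw [qbinom_eq h1, qbinom_eq h, qbinom_eq h2, qF_top hk h1, qF_bot hk h,
      qD_succ hk, ha1, ha2, pow_add]
    have hD := qD_ne hq0 hq1 (q := q) (k - 1)
    have hk' := one_sub_pow_ne hq0 hq1 hk
    field_simp
    ring
  · rcases Nat.eq_or_lt_of_le h with h' | h'
    · obtain rfl : k = n + 1 := h'.symm
      rw [qbinom_self hq0 hq1, qbinom_of_gt h, show n + 1 - (n+1) = 0 by omega,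
        Nat.add_sub_cancel, qbinom_self hq0 hq1]
      ring
    · rw [qbinom_of_gt (by omega : n + 1 < k), qbinom_of_gt h, qbinom_of_gt (by omega)]
      simp

lemma qbinom_pascal2 (hq0 : 0 < q) (hq1 : q < 1) {n k : ℕ} (hk : 1 ≤ k) :
    qbinom q (n+1) k = q ^ k * qbinom q n k + qbinom q n (k-1) := by
  have h1 := qbinom_pascal1 hq0 hq1 (n := n) hk
  have h2 := qbinom_ratio2 hq0 hq1 (n := n) hk
  rcases le_or_gt k (n+1) with h | h
  · have hpow : q ^ (n + 1 - k) * q ^ k = q ^ (n+1) := by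
      rw [← pow_add]; congr 1; omega
    nlinarith [h1, h2]
  · rw [qbinom_of_gt (by omega : n + 1 < k), qbinom_of_gt (by omega : n < k),
      qbinom_of_gt (by omega : n < k - 1)]
    simp

/-- `[n+1] * C(n, m-1) = [m] * C(n+1, m)` for `1 ≤ m`. -/
lemma qbinom_ratio (hq0 : 0 < q) (hq1 : q < 1) {n m : ℕ} (hm : 1 ≤ m) :
    qnum q (n+1) * qbinom q n (m-1) = qnum q m * qbinom q (n+1) m := by
  rcases le_or_gt m (n+1) with h | h
  · have h2 : m - 1 ≤ n := by omega
    rw [qnum, qnum, qbinom_eq h2, qbinom_eq h, qF_top hm h, qD_succ hm]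
    have hD := qD_ne hq0 hq1 (q := q) (m - 1)
    have hm' := one_sub_pow_ne hq0 hq1 hm
    have h1q : (1 : ℝ) - q ≠ 0 := by linarith
    field_simp
  · rw [qbinom_of_gt h, qbinom_of_gt (show n < m - 1 by omega)]
    simp

end basic

section sums
variable {q : ℝ}

lemma tri_succ (t : ℕ) : (t+1)*(t+2)/2 = t*(t+1)/2 + (t+1) := by
  obtain ⟨c, hc⟩ := Nat.even_mul_succ_self t
  have e1 : (t+1)*(t+2) = t*(t+1) + 2*(t+1) := by ring
  omega

lemma tri_exp {m : ℕ} (hm : 1 ≤ m) : m*(m+1)/2 = m*(m-1)/2 + m := by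
  obtain ⟨t, rfl⟩ : ∃ t, m = t + 1 := ⟨m - 1, by omega⟩
  have h := tri_succ t
  have e2 : (t+1)*(t+1-1) = t*(t+1) := by rw [Nat.add_sub_cancel]; ring
  rw [e2]
  have e3 : (t+1)*(t+1+1) = (t+1)*(t+2) := by ring
  rw [e3, h]

/-- Prefix-sum closed form for alternating q-binomial sums. -/
lemma Plem (hq0 : 0 < q) (hq1 : q < 1) (N : ℕ) : ∀ t : ℕ,
    ∑ i ∈ Finset.range (t+1), (-1:ℝ)^i * q^(i*(i-1)/2) * qbinom q (N+1) i
      = (-1:ℝ)^t * q^(t*(t+1)/2) * qbinom q N t := by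
  intro t
  induction t with
  | zero => simp [qbinom_zero]
  | succ t ih =>
    rw [Finset.sum_range_succ, ih, qbinom_pascal2 hq0 hq1 (by omega : 1 ≤ t + 1)]
    rw [Nat.add_sub_cancel, Nat.mul_comm (t+1) t]
    rw [show (t+1)*(t+1+1)/2 = t*(t+1)/2 + (t+1) by
      have h1 := tri_succ t
      have h2 : (t+1)*(t+1+1) = (t+1)*(t+2) := by ring
      omega]
    rw [pow_add, pow_add]
    ring

/-- Tail-sum closed form. -/
lemma TLlem (hq0 : 0 < q) (hq1 : q < 1) {N m : ℕ} (hm : 1 ≤ m) (hm2 : m ≤ N + 1) :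
    ∑ k ∈ Finset.Icc m (N+1), (-1:ℝ)^(k+1) * q^(k*(k-1)/2) * qbinom q (N+1) k
      = (-1:ℝ)^(m+1) * q^(m*(m-1)/2) * qbinom q N (m-1) := by
  set f : ℕ → ℝ := fun i => (-1:ℝ)^i * q^(i*(i-1)/2) * qbinom q (N+1) i with hf
  have total : ∑ i ∈ Finset.range (N+2), f i = 0 := by
    rw [Plem hq0 hq1 N (N+1), qbinom_of_gt (by omega)]
    ring
  have hsplit : ∑ i ∈ Finset.Ico 0 m, f i + ∑ i ∈ Finset.Ico m (N+2), f i
      = ∑ i ∈ Finset.Ico 0 (N+2), f i := Finset.sum_Ico_consecutive f (by omega) (by omega)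
  rw [← Finset.Ico_add_one_right_eq_Icc]
  have e0 : Finset.Ico 0 (N+2) = Finset.range (N+2) := by
    rw [Finset.range_eq_Ico]
  have e1 : Finset.Ico 0 m = Finset.range m := by rw [Finset.range_eq_Ico]
  have hpre : ∑ i ∈ Finset.range m, f i
      = (-1:ℝ)^(m-1) * q^((m-1)*m/2) * qbinom q N (m-1) := by
    have := Plem hq0 hq1 N (m-1)
    rw [show m - 1 + 1 = m by omega] at this
    rw [this]
  have e2 : ∑ k ∈ Finset.Ico m (N+2), (-1:ℝ)^(k+1) * q^(k*(k-1)/2) * qbinom q (N+1) k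
      = - ∑ k ∈ Finset.Ico m (N+2), f k := by
    rw [← Finset.sum_neg_distrib]
    refine Finset.sum_congr rfl (fun k _ => ?_)
    rw [hf, pow_succ]
    ring
  rw [show N + 1 + 1 = N + 2 from rfl, e2]
  have e3 : ∑ k ∈ Finset.Ico m (N+2), f k = - ∑ i ∈ Finset.range m, f i := by
    rw [e0, e1] at hsplit
    linarith [total, hsplit]
  rw [e3, neg_neg, hpre]
  rw [Nat.mul_comm (m-1) m]
  rw [show m + 1 = (m-1) + 2 by omega, pow_add]
  ring

/-- Triangular sum swap. -/
lemma sum_tri (n : ℕ) (f : ℕ → ℕ → ℝ) :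
    ∑ k ∈ Finset.Icc 1 n, ∑ m ∈ Finset.Icc 1 k, f k m
      = ∑ m ∈ Finset.Icc 1 n, ∑ k ∈ Finset.Icc m n, f k m :=
  Finset.sum_comm' (by intro k m; simp only [Finset.mem_Icc]; omega)

end sums

noncomputable def qh (q : ℝ) (m : ℕ) : ℝ := ∑ p ∈ Finset.Icc 1 m, (qnum q p)⁻¹

section K2
variable {q : ℝ}

lemma qbinom_sub (hq0 : 0 < q) (hq1 : q < 1) {n m : ℕ} (hm : 1 ≤ m) :
    qbinom q n (m-1) = qnum q m * qbinom q (n+1) m / qnum q (n+1) := by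
  rw [eq_div_iff (qnum_ne hq0 hq1 (by omega : (1:ℕ) ≤ n+1))]
  linarith [qbinom_ratio hq0 hq1 (n := n) hm]

lemma K2term (hq0 : 0 < q) (hq1 : q < 1) {N m : ℕ} (hm1 : 1 ≤ m) (hm2 : m ≤ N + 1) (x : ℝ) :
    (-1:ℝ)^(m+1) * q^(m*(m+1)/2) * qbinom q (N+1) m * (x / qnum q m)
    = (-1:ℝ)^(m+1) * q^(m*(m+1)/2) * qbinom q N m * (x / qnum q m)
      + q^(N+1) / qnum q (N+1) * ((-1:ℝ)^(m+1) * q^(m*(m-1)/2) * qbinom q (N+1) m * x) := by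
  have hqm := qnum_ne hq0 hq1 hm1
  have hqN := qnum_ne hq0 hq1 (show (1:ℕ) ≤ N+1 by omega)
  have htri := tri_exp hm1
  have hp2 : q^m * q^(N+1-m) = q^(N+1) := by rw [← pow_add]; congr 1; omega
  have hsub := qbinom_sub hq0 hq1 (n := N) hm1
  nth_rewrite 1 [qbinom_pascal1 hq0 hq1 hm1]
  rw [htri, pow_add, hsub]
  field_simp
  have hp2' : q^m * q^(N+1-m) = q * q^N := by rw [hp2, pow_succ]; ring
  linear_combination (-(q ^ (m*(m-1)/2) * qnum q m * qbinom q (N+1) m * x)) * hp2'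

lemma inner_lem (hq0 : 0 < q) (hq1 : q < 1) (N : ℕ) :
    ∑ m ∈ Finset.Icc 1 (N+1), (-1:ℝ)^(m+1) * q^(m*(m-1)/2) * qbinom q (N+1) m * qh q m
    = (qnum q (N+1))⁻¹ := by
  have hqN := qnum_ne hq0 hq1 (show (1:ℕ) ≤ N+1 by omega)
  have e1 : ∀ m ∈ Finset.Icc 1 (N+1), (-1:ℝ)^(m+1) * q^(m*(m-1)/2) * qbinom q (N+1) m * qh q m
      = ∑ p ∈ Finset.Icc 1 m, (-1:ℝ)^(m+1) * q^(m*(m-1)/2) * qbinom q (N+1) m * (qnum q p)⁻¹ :=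
    fun m _ => by rw [qh, Finset.mul_sum]
  rw [Finset.sum_congr rfl e1,
    sum_tri (N+1) (fun k p => (-1:ℝ)^(k+1) * q^(k*(k-1)/2) * qbinom q (N+1) k * (qnum q p)⁻¹)]
  have e2 : ∀ p ∈ Finset.Icc 1 (N+1),
      ∑ k ∈ Finset.Icc p (N+1), (-1:ℝ)^(k+1) * q^(k*(k-1)/2) * qbinom q (N+1) k * (qnum q p)⁻¹
      = (-1:ℝ)^(p+1) * q^(p*(p-1)/2) * qbinom q (N+1) p * (qnum q (N+1))⁻¹ := by
    intro p hp
    obtain ⟨hp1, hp2⟩ := Finset.mem_Icc.1 hp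
    have hqp := qnum_ne hq0 hq1 hp1
    rw [← Finset.sum_mul, TLlem hq0 hq1 hp1 hp2, qbinom_sub hq0 hq1 hp1]
    field_simp
  rw [Finset.sum_congr rfl e2]
  have e3 : ∀ p ∈ Finset.Icc 1 (N+1),
      (-1:ℝ)^(p+1) * q^(p*(p-1)/2) * qbinom q (N+1) p * (qnum q (N+1))⁻¹
      = ((-1:ℝ)^(p+1) * q^(p*(p-1)/2) * qbinom q (N+1) p) * (qnum q (N+1))⁻¹ :=
    fun p _ => by ring
  rw [Finset.sum_congr rfl e3, ← Finset.sum_mul, TLlem hq0 hq1 le_rfl (by omega), qbinom_zero]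
  norm_num

lemma K2lem (hq0 : 0 < q) (hq1 : q < 1) : ∀ N : ℕ,
    ∑ m ∈ Finset.Icc 1 N, (-1:ℝ)^(m+1) * q^(m*(m+1)/2) * qbinom q N m * (qh q m / qnum q m)
    = ∑ m ∈ Finset.Icc 1 N, q^m / (qnum q m)^2 := by
  intro N
  induction N with
  | zero => simp
  | succ N ih =>
    have hqN := qnum_ne hq0 hq1 (show (1:ℕ) ≤ N+1 by omega)
    have e1 : ∀ m ∈ Finset.Icc 1 (N+1),
        (-1:ℝ)^(m+1) * q^(m*(m+1)/2) * qbinom q (N+1) m * (qh q m / qnum q m)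
        = (-1:ℝ)^(m+1) * q^(m*(m+1)/2) * qbinom q N m * (qh q m / qnum q m)
          + q^(N+1) / qnum q (N+1) * ((-1:ℝ)^(m+1) * q^(m*(m-1)/2) * qbinom q (N+1) m * qh q m) := by
      intro m hm
      obtain ⟨hm1, hm2⟩ := Finset.mem_Icc.1 hm
      exact K2term hq0 hq1 hm1 hm2 _
    rw [Finset.sum_congr rfl e1, Finset.sum_add_distrib, ← Finset.mul_sum, inner_lem hq0 hq1]
    rw [Finset.sum_Icc_succ_top (show (1:ℕ) ≤ N+1 by omega), qbinom_of_gt (by omega : N < N+1), ih]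
    rw [Finset.sum_Icc_succ_top (show (1:ℕ) ≤ N+1 by omega)
      (fun m => q^m / (qnum q m)^2)]
    field_simp
    ring

end K2

section main
variable {q : ℝ}

lemma lemA (hq0 : 0 < q) (hq1 : q < 1) (n : ℕ) :
    ∑ k ∈ Finset.Icc 1 (n+1), (-1:ℝ)^(k+1) * q^(k*(k-1)/2) * qbinom q n (k-1)
        * ((∑ m ∈ Finset.Icc 1 k, q^m / (qnum q m)^2 * qh q m) / qnum q k)
    = (∑ m ∈ Finset.Icc 1 (n+1), q^m / (qnum q m)^2) / (qnum q (n+1))^2 := by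
  have hqN := qnum_ne hq0 hq1 (show (1:ℕ) ≤ n+1 by omega)
  have e1 : ∀ k ∈ Finset.Icc 1 (n+1),
      (-1:ℝ)^(k+1) * q^(k*(k-1)/2) * qbinom q n (k-1)
        * ((∑ m ∈ Finset.Icc 1 k, q^m / (qnum q m)^2 * qh q m) / qnum q k)
      = ∑ m ∈ Finset.Icc 1 k,
          ((-1:ℝ)^(k+1) * q^(k*(k-1)/2) * qbinom q (n+1) k)
            * (q^m / (qnum q m)^2 * qh q m) * (qnum q (n+1))⁻¹ := by
    intro k hk
    obtain ⟨hk1, hk2⟩ := Finset.mem_Icc.1 hk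
    have hqk := qnum_ne hq0 hq1 hk1
    rw [qbinom_sub hq0 hq1 hk1]
    rw [show ∀ S : ℝ, (-1:ℝ)^(k+1) * q^(k*(k-1)/2) * (qnum q k * qbinom q (n+1) k / qnum q (n+1)) * (S / qnum q k)
        = ((-1:ℝ)^(k+1) * q^(k*(k-1)/2) * qbinom q (n+1) k) * S * (qnum q (n+1))⁻¹ from fun S => by
      field_simp]
    rw [Finset.mul_sum, Finset.sum_mul]
  rw [Finset.sum_congr rfl e1,
    sum_tri (n+1) (fun k m => ((-1:ℝ)^(k+1) * q^(k*(k-1)/2) * qbinom q (n+1) k)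
      * (q^m / (qnum q m)^2 * qh q m) * (qnum q (n+1))⁻¹)]
  have e2 : ∀ m ∈ Finset.Icc 1 (n+1),
      ∑ k ∈ Finset.Icc m (n+1), ((-1:ℝ)^(k+1) * q^(k*(k-1)/2) * qbinom q (n+1) k)
        * (q^m / (qnum q m)^2 * qh q m) * (qnum q (n+1))⁻¹
      = ((-1:ℝ)^(m+1) * q^(m*(m+1)/2) * qbinom q (n+1) m * (qh q m / qnum q m))
          * ((qnum q (n+1))⁻¹ * (qnum q (n+1))⁻¹) := by
    intro m hm
    obtain ⟨hm1, hm2⟩ := Finset.mem_Icc.1 hm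
    have hqm := qnum_ne hq0 hq1 hm1
    have hmul : ∀ x : ℝ, (∑ k ∈ Finset.Icc m (n+1), (-1:ℝ)^(k+1) * q^(k*(k-1)/2) * qbinom q (n+1) k) * x
        = ∑ k ∈ Finset.Icc m (n+1), ((-1:ℝ)^(k+1) * q^(k*(k-1)/2) * qbinom q (n+1) k) * x :=
      fun x => Finset.sum_mul _ _ _
    rw [show (fun k => ((-1:ℝ)^(k+1) * q^(k*(k-1)/2) * qbinom q (n+1) k)
      * (q^m / (qnum q m)^2 * qh q m) * (qnum q (n+1))⁻¹) = (fun k => ((-1:ℝ)^(k+1) * q^(k*(k-1)/2) * qbinom q (n+1) k)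
      * ((q^m / (qnum q m)^2 * qh q m) * (qnum q (n+1))⁻¹)) from funext (fun k => by ring)]
    rw [← Finset.sum_mul, TLlem hq0 hq1 hm1 hm2, qbinom_sub hq0 hq1 hm1,
      tri_exp hm1, pow_add]
    field_simp
    ring
  rw [Finset.sum_congr rfl e2, ← Finset.sum_mul, K2lem hq0 hq1 (n+1)]
  rw [div_eq_mul_inv, sq]
  ring

/-- Compact form of the RHS inner double sum. -/
lemma compact (N t : ℕ) :
    ∑ k ∈ Finset.Icc 1 t, ∑ m ∈ Finset.Icc 1 k, ∑ p ∈ Finset.Icc 1 m,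
        (-1:ℝ)^(k+1) * q^(k*(k+1)/2) * qbinom q N k
          * (q^m / (qnum q k * (qnum q m)^2 * qnum q p))
    = ∑ k ∈ Finset.Icc 1 t, (-1:ℝ)^(k+1) * q^(k*(k+1)/2) * qbinom q N k
        * ((∑ m ∈ Finset.Icc 1 k, q^m / (qnum q m)^2 * qh q m) / qnum q k) := by
  refine Finset.sum_congr rfl (fun k _ => ?_)
  simp only [qh, Finset.mul_sum, Finset.sum_mul, Finset.sum_div, Finset.mul_sum]
  refine Finset.sum_congr rfl (fun m _ => ?_)
  refine Finset.sum_congr rfl (fun p _ => ?_)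
  ring

end main

lemma mainlem {q : ℝ} (hq0 : 0 < q) (hq1 : q < 1) : ∀ n : ℕ,
    (∑ k ∈ Finset.Icc 1 n, ∑ m ∈ Finset.Icc 1 k,
        q ^ (k + m) / ((qnum q k) ^ 2 * (qnum q m) ^ 2))
    = ∑ k ∈ Finset.Icc 1 n, ∑ m ∈ Finset.Icc 1 k, ∑ p ∈ Finset.Icc 1 m,
        (-1 : ℝ) ^ (k + 1) * q ^ (k * (k + 1) / 2) * qbinom q n k *
          (q ^ m / (qnum q k * (qnum q m) ^ 2 * qnum q p)) := by
  intro n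
  induction n with
  | zero => simp
  | succ n ih =>
    have hqN := qnum_ne hq0 hq1 (show (1:ℕ) ≤ n+1 by omega)
    have hL : (∑ k ∈ Finset.Icc 1 (n+1), ∑ m ∈ Finset.Icc 1 k,
          q ^ (k + m) / ((qnum q k) ^ 2 * (qnum q m) ^ 2))
        = (∑ k ∈ Finset.Icc 1 n, ∑ m ∈ Finset.Icc 1 k,
            q ^ (k + m) / ((qnum q k) ^ 2 * (qnum q m) ^ 2))
          + q^(n+1) * ((∑ m ∈ Finset.Icc 1 (n+1), q^m / (qnum q m)^2) / (qnum q (n+1))^2) := by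
      rw [Finset.sum_Icc_succ_top (show (1:ℕ) ≤ n+1 by omega)]
      congr 1
      rw [Finset.sum_div, Finset.mul_sum]
      refine Finset.sum_congr rfl (fun m _ => ?_)
      rw [pow_add]
      ring
    have e1 : ∀ k ∈ Finset.Icc 1 (n+1),
        (-1:ℝ)^(k+1) * q^(k*(k+1)/2) * qbinom q (n+1) k
          * ((∑ m ∈ Finset.Icc 1 k, q^m / (qnum q m)^2 * qh q m) / qnum q k)
        = (-1:ℝ)^(k+1) * q^(k*(k+1)/2) * qbinom q n k
            * ((∑ m ∈ Finset.Icc 1 k, q^m / (qnum q m)^2 * qh q m) / qnum q k)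
          + q^(n+1) * ((-1:ℝ)^(k+1) * q^(k*(k-1)/2) * qbinom q n (k-1)
            * ((∑ m ∈ Finset.Icc 1 k, q^m / (qnum q m)^2 * qh q m) / qnum q k)) := by
      intro k hk
      obtain ⟨hk1, hk2⟩ := Finset.mem_Icc.1 hk
      rw [tri_exp hk1, pow_add]
      nth_rewrite 1 [qbinom_pascal1 hq0 hq1 hk1]
      have hp : q^(n+1-k) * q^k = q^(n+1) := by rw [← pow_add]; congr 1; omega
      linear_combination ((-1:ℝ)^(k+1) * q^(k*(k-1)/2) * qbinom q n (k-1)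
        * ((∑ m ∈ Finset.Icc 1 k, q^m / (qnum q m)^2 * qh q m) / qnum q k)) * hp
    have hR : (∑ k ∈ Finset.Icc 1 (n+1), ∑ m ∈ Finset.Icc 1 k, ∑ p ∈ Finset.Icc 1 m,
          (-1 : ℝ) ^ (k + 1) * q ^ (k * (k + 1) / 2) * qbinom q (n+1) k *
            (q ^ m / (qnum q k * (qnum q m) ^ 2 * qnum q p)))
        = (∑ k ∈ Finset.Icc 1 n, ∑ m ∈ Finset.Icc 1 k, ∑ p ∈ Finset.Icc 1 m,
            (-1 : ℝ) ^ (k + 1) * q ^ (k * (k + 1) / 2) * qbinom q n k *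
              (q ^ m / (qnum q k * (qnum q m) ^ 2 * qnum q p)))
          + q^(n+1) * ((∑ m ∈ Finset.Icc 1 (n+1), q^m / (qnum q m)^2) / (qnum q (n+1))^2) := by
      rw [compact (n+1) (n+1), compact n n, Finset.sum_congr rfl e1, Finset.sum_add_distrib,
        ← Finset.mul_sum, lemA hq0 hq1 n,
        Finset.sum_Icc_succ_top (show (1:ℕ) ≤ n+1 by omega), qbinom_of_gt (show n < n+1 by omega)]
      ring
    rw [hL, hR, ih]

theorem example2 (n : ℕ) (hn : 0 < n) (q : ℝ) (hq0 : 0 < q) (hq1 : q < 1) :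
    (∑ k ∈ Finset.Icc 1 n, ∑ m ∈ Finset.Icc 1 k,
        q ^ (k + m) / ((qnum q k) ^ 2 * (qnum q m) ^ 2))
    = ∑ k ∈ Finset.Icc 1 n, ∑ m ∈ Finset.Icc 1 k, ∑ p ∈ Finset.Icc 1 m,
        (-1 : ℝ) ^ (k + 1) * q ^ (k * (k + 1) / 2) * qbinom q n k *
          (q ^ m / (qnum q k * (qnum q m) ^ 2 * qnum q p)) := mainlem hq0 hq1 n
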